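/- Let G be a connected finite simple graph and let G_S be the graph with the same vertex set as G in which two distinct vertices u and v are adjacent if and only if S(u,v) = {u,v}. Then G is isomorphic to G_S if and only if G is geodetic. -/

import Mathlib

/-- The interval `I(u,v)`: vertices lying on some shortest `u,v`-path. -/
def SimpleGraph.interval {V : Type*} (G : SimpleGraph V) (u v : V) : Set V :=
  {x | ∃ p : G.Walk u v, p.IsPath ∧ p.length = G.dist u v ∧ x ∈ p.support}

/-- The stress interval `S(u,v)`: vertices lying on every shortest `u,v`-path
(empty if `u` and `v` are in different components). -/
def SimpleGraph.stressInterval {V : Type*} (G : SimpleGraph V) (u v : V) : Set V :=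
  {x | G.Reachable u v ∧
    ∀ p : G.Walk u v, p.IsPath → p.length = G.dist u v → x ∈ p.support}

/-- A set of vertices is stress convex if it contains the stress interval
between any two of its elements. -/
def SimpleGraph.IsStressConvex {V : Type*} (G : SimpleGraph V) (U : Set V) : Prop :=
  ∀ ⦃u⦄, u ∈ U → ∀ ⦃v⦄, v ∈ U → G.stressInterval u v ⊆ U

/-- A graph is geodetic if there is a unique shortest path between each pair of
vertices. -/
def SimpleGraph.Geodetic {V : Type*} (G : SimpleGraph V) : Prop :=
  ∀ u v : V, ∃! p : G.Walk u v, p.IsPath ∧ p.length = G.dist u v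

/-- The underlying graph `G_S` of the stress function: distinct vertices `u, v` are
adjacent iff `S(u,v) = {u,v}`. -/
def SimpleGraph.stressUnderlying {V : Type*} (G : SimpleGraph V) : SimpleGraph V :=
  SimpleGraph.fromRel (fun u v => G.stressInterval u v = {u, v})

section Aux

open SimpleGraph

variable {V : Type*} {G : SimpleGraph V}

/-- A walk of length 1 is the single-edge walk. -/
lemma walk_length_one_eq {u v : V} (p : G.Walk u v) (hp : p.length = 1) :
    ∃ h : G.Adj u v, p = SimpleGraph.Walk.cons h SimpleGraph.Walk.nil := by
  cases p with
  | nil => simp at hp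
  | cons h p' =>
    have hp0 : p'.length = 0 := by simpa using hp
    have hw := SimpleGraph.Walk.eq_of_length_eq_zero hp0
    subst hw
    rw [SimpleGraph.Walk.length_eq_zero_iff, SimpleGraph.Walk.nil_iff_eq_nil] at hp0
    exact ⟨h, by rw [hp0]⟩

/-- If `u ~ v` in `G`, then `S(u,v) = {u,v}`. -/
lemma stressInterval_of_adj {u v : V} (h : G.Adj u v) :
    G.stressInterval u v = {u, v} := by
  have hdist : G.dist u v = 1 := SimpleGraph.dist_eq_one_iff_adj.mpr h
  ext x
  constructor
  · rintro ⟨-, hx⟩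
    have := hx (SimpleGraph.Walk.cons h SimpleGraph.Walk.nil)
      (by simp [SimpleGraph.Walk.isPath_def, h.ne]) (by simp [hdist])
    have h2 : x = u ∨ x = v := by simpa using this
    rcases h2 with h1 | h1 <;> simp [h1]
  · intro hx
    refine ⟨h.reachable, fun p _ _ => ?_⟩
    rcases hx with h1 | h1 <;> subst h1
    · exact p.start_mem_support
    · exact p.end_mem_support

lemma le_stressUnderlying : G ≤ G.stressUnderlying := by
  intro u v h
  exact (SimpleGraph.fromRel_adj _ _ _).mpr ⟨h.ne, Or.inl (stressInterval_of_adj h)⟩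

/-- If `u ≠ v` and `S(u,v) = {u,v}` and `G` is geodetic and connected, then `u ~ v`. -/
lemma adj_of_stressInterval_eq (hG : G.Connected) (hgeo : G.Geodetic) {u v : V}
    (hne : u ≠ v) (hS : G.stressInterval u v = {u, v}) : G.Adj u v := by
  classical
  obtain ⟨p, ⟨hp, hpl⟩, huniq⟩ := hgeo u v
  have hsup : ∀ x ∈ p.support, x ∈ G.stressInterval u v := fun x hx =>
    ⟨hG.preconnected u v, fun q hq hql => by rw [huniq q ⟨hq, hql⟩]; exact hx⟩
  rw [← SimpleGraph.dist_eq_one_iff_adj]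
  have hlen : p.support.length = p.length + 1 := SimpleGraph.Walk.length_support p
  have hnd : p.support.Nodup := hp.support_nodup
  have hsub : p.support.toFinset ⊆ ({u, v} : Finset V) := by
    intro x hx
    rw [List.mem_toFinset] at hx
    have := hsup x hx
    rw [hS] at this
    have h2 : x = u ∨ x = v := by simpa using this
    rcases h2 with h1 | h1 <;> simp [h1]
  have hcard : p.support.toFinset.card ≤ 2 := by
    calc p.support.toFinset.card ≤ ({u, v} : Finset V).card := Finset.card_le_card hsub
      _ ≤ 2 := Finset.card_insert_le _ _ |>.trans (by simp)
  rw [List.toFinset_card_of_nodup hnd, hlen] at hcard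
  have hpos : G.dist u v ≠ 0 := by
    rw [Ne, hG.dist_eq_zero_iff]
    exact hne
  omega

/-- Key lemma: if adjacency in `G_S` implies adjacency in `G`, then shortest paths
are unique (strong induction on the distance). -/
lemma unique_shortest (hG : G.Connected)
    (hS : ∀ u v : V, u ≠ v → G.stressInterval u v = {u, v} → G.Adj u v) :
    ∀ n : ℕ, ∀ u v : V, G.dist u v = n → ∀ p q : G.Walk u v,
      p.IsPath → p.length = G.dist u v → q.IsPath → q.length = G.dist u v → p = q := by
  classical
  intro n
  induction n using Nat.strong_induction_on with
  | _ n IH =>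
    intro u v hn p q hp hpl hq hql
    by_contra hne
    -- first: n ≥ 2, since for n = 0 or 1 walks are forced
    rcases Nat.lt_or_ge n 2 with h2 | h2
    · interval_cases n
      · -- dist = 0: u = v and both walks are nil
        have huv : u = v := hG.dist_eq_zero_iff.mp hn
        subst huv
        rw [hn] at hpl hql
        rw [SimpleGraph.Walk.length_eq_zero_iff, SimpleGraph.Walk.nil_iff_eq_nil] at hpl hql
        exact hne (hpl.trans hql.symm)
      · -- dist = 1: both walks are the single edge
        rw [hn] at hpl hql
        obtain ⟨h1, hp1⟩ := walk_length_one_eq p hpl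
        obtain ⟨h2, hq1⟩ := walk_length_one_eq q hql
        exact hne (hp1.trans hq1.symm)
    · -- n ≥ 2
      have huv : u ≠ v := by
        intro h; subst h
        rw [hG.dist_eq_zero_iff.mpr rfl] at hn; omega
    -- every vertex of the stress interval is u or v
      have hSuv : G.stressInterval u v = {u, v} := by
        ext x
        constructor
        · rintro ⟨-, hx⟩
          by_contra hxuv
          rw [Set.mem_insert_iff, Set.mem_singleton_iff] at hxuv
          push_neg at hxuv
          obtain ⟨hxu, hxv⟩ := hxuv
          have hxp : x ∈ p.support := hx p hp hpl
          have hxq : x ∈ q.support := hx q hq hql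
          -- split p and q at x
          have hdux : G.dist u x ≠ 0 := fun h0 => hxu (hG.dist_eq_zero_iff.mp h0).symm
          have hdxv : G.dist x v ≠ 0 := fun h0 => hxv (hG.dist_eq_zero_iff.mp h0)
          have htri : G.dist u v ≤ G.dist u x + G.dist x v := hG.dist_triangle
          have keyp : ∀ (r : G.Walk u v) (hr : r.IsPath) (hrl : r.length = G.dist u v)
              (hxr : x ∈ r.support),
              (r.takeUntil x hxr).length = G.dist u x ∧
              (r.dropUntil x hxr).length = G.dist x v := by
            intro r hr hrl hxr
            have hsp := r.take_spec hxr
            have hlen : (r.takeUntil x hxr).length + (r.dropUntil x hxr).length = r.length := by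
              rw [← SimpleGraph.Walk.length_append, hsp]
            have h1 : G.dist u x ≤ (r.takeUntil x hxr).length := SimpleGraph.dist_le _
            have h2 : G.dist x v ≤ (r.dropUntil x hxr).length := SimpleGraph.dist_le _
            omega
          have hlenp : (p.takeUntil x hxp).length + (p.dropUntil x hxp).length = p.length := by
            rw [← SimpleGraph.Walk.length_append, p.take_spec hxp]
          obtain ⟨hptl, hpdl⟩ := keyp p hp hpl hxp
          obtain ⟨hqtl, hqdl⟩ := keyp q hq hql hxq
          have hltux : G.dist u x < n := by omega
          have hltxv : G.dist x v < n := by omega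
          have htake : p.takeUntil x hxp = q.takeUntil x hxq :=
            IH _ hltux u x rfl _ _ (hp.takeUntil hxp) hptl (hq.takeUntil hxq) hqtl
          have hdrop : p.dropUntil x hxp = q.dropUntil x hxq :=
            IH _ hltxv x v rfl _ _ (hp.dropUntil hxp) hpdl (hq.dropUntil hxq) hqdl
          apply hne
          rw [← p.take_spec hxp, ← q.take_spec hxq, htake, hdrop]
        · intro hx
          refine ⟨hG.preconnected u v, fun r _ _ => ?_⟩
          rcases hx with h1 | h1 <;> subst h1
          · exact r.start_mem_support
          · exact r.end_mem_support
      have hadj : G.Adj u v := hS u v huv hSuv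
      have : G.dist u v = 1 := SimpleGraph.dist_eq_one_iff_adj.mpr hadj
      omega

end Aux

/-- a connected finite graph `G` is isomorphic to the underlying graph
`G_S` of its stress function iff `G` is geodetic. -/
theorem iso_stressUnderlying_iff_geodetic {V : Type*} [Fintype V]
    (G : SimpleGraph V) (hG : G.Connected) :
    Nonempty (G ≃g G.stressUnderlying) ↔ G.Geodetic := by
  classical
  constructor
  · rintro ⟨e⟩
    -- step 1: G = G_S
    have hle : G ≤ G.stressUnderlying := le_stressUnderlying
    have hsub : G.edgeFinset ⊆ G.stressUnderlying.edgeFinset :=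
      SimpleGraph.edgeFinset_mono hle
    have hcard : G.stressUnderlying.edgeFinset.card ≤ G.edgeFinset.card := by
      have := Fintype.card_congr e.mapEdgeSet
      simp only [SimpleGraph.edgeFinset, Set.toFinset_card]
      omega
    have heq : G = G.stressUnderlying :=
      SimpleGraph.edgeFinset_inj.mp (Finset.eq_of_subset_of_card_le hsub hcard)
    -- step 2: geodetic
    have hSadj : ∀ u v : V, u ≠ v → G.stressInterval u v = {u, v} → G.Adj u v := by
      intro u v hne hSe
      rw [heq]
      exact (SimpleGraph.fromRel_adj _ _ _).mpr ⟨hne, Or.inl hSe⟩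
    intro u v
    obtain ⟨p, hp, hpl⟩ := hG.exists_path_of_dist u v
    exact ⟨p, ⟨hp, hpl⟩, fun q ⟨hq, hql⟩ =>
      unique_shortest hG hSadj (G.dist u v) u v rfl q p hq hql hp hpl⟩
  · intro hgeo
    -- G_S = G
    have heq : G.stressUnderlying = G := by
      ext u v
      constructor
      · intro h
        rw [SimpleGraph.stressUnderlying, SimpleGraph.fromRel_adj] at h
        obtain ⟨hne, h | h⟩ := h
        · exact adj_of_stressInterval_eq hG hgeo hne h
        · exact (adj_of_stressInterval_eq hG hgeo (Ne.symm hne) h).symm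
      · intro h
        exact le_stressUnderlying h
    rw [heq]
    exact ⟨SimpleGraph.Iso.refl⟩
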